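/- For 0 < a, b < 1 with a³b³ − 2a²b² − (a² + b²) + 3ab = 0, the Blaschke product B(z) = z·(z² − a)/(1 − a z²)·(z² − b)/(1 − b z²) has the property that whenever z_1 ≠ z_2 on the unit circle satisfy B(z_1) = B(z_2) and z_1 + z_2 ≠ 0, the intersection point z = x + iy = 2z_1z_2/(z_1+z_2) of the tangent lines at z_1, z_2 satisfies (a(b+1)²x² + a(b−1)²y² − 4b)·((a²b³ − ab² + 2b² + 3b − a)x² + (a²b³ − ab² − 2b² + 3b − a)y² − 4b) = 0. -/

import Mathlib

open Complex

theorem exterior_curve_two_ellipses (a b : ℝ)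
    (ha : 0 < a) (ha' : a < 1) (hb : 0 < b) (hb' : b < 1)
    (hab : a ^ 3 * b ^ 3 - 2 * a ^ 2 * b ^ 2 - (a ^ 2 + b ^ 2) + 3 * a * b = 0)
    (B : ℂ → ℂ)
    (hB : ∀ z, B z = z * ((z ^ 2 - (a : ℂ)) / (1 - (a : ℂ) * z ^ 2)) *
      ((z ^ 2 - (b : ℂ)) / (1 - (b : ℂ) * z ^ 2)))
    (z₁ z₂ : ℂ) (hz₁ : ‖z₁‖ = 1) (hz₂ : ‖z₂‖ = 1)
    (hne : z₁ ≠ z₂) (hsum : z₁ + z₂ ≠ 0) (heq : B z₁ = B z₂)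
    (z : ℂ) (hz : z = 2 * z₁ * z₂ / (z₁ + z₂)) (x y : ℝ)
    (hx : x = z.re) (hy : y = z.im) :
    (a * (b + 1) ^ 2 * x ^ 2 + a * (b - 1) ^ 2 * y ^ 2 - 4 * b) *
      ((a ^ 2 * b ^ 3 - a * b ^ 2 + 2 * b ^ 2 + 3 * b - a) * x ^ 2 +
       (a ^ 2 * b ^ 3 - a * b ^ 2 - 2 * b ^ 2 + 3 * b - a) * y ^ 2 - 4 * b) = 0 := by
  have hz₁0 : z₁ ≠ 0 := by intro h; rw [h] at hz₁; simp at hz₁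
  have hz₂0 : z₂ ≠ 0 := by intro h; rw [h] at hz₂; simp at hz₂
  have hden : ∀ (c : ℝ) (w : ℂ), 0 < c → c < 1 → ‖w‖ = 1 →
      (1 : ℂ) - (c : ℂ) * w ^ 2 ≠ 0 := by
    intro c w hc hc' hw h
    have h1 : (c : ℂ) * w ^ 2 = 1 := by linear_combination -h
    have h2 := congrArg norm h1
    simp [norm_mul, norm_pow, hw, Complex.norm_real, Real.norm_eq_abs, abs_of_pos hc] at h2
    linarith
  have hda1 := hden a z₁ ha ha' hz₁
  have hda2 := hden a z₂ ha ha' hz₂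
  have hdb1 := hden b z₁ hb hb' hz₁
  have hdb2 := hden b z₂ hb hb' hz₂
  -- cleared form of B z₁ = B z₂
  have hP : z₁ * (z₁ ^ 2 - (a : ℂ)) * (z₁ ^ 2 - (b : ℂ)) *
      ((1 - (a : ℂ) * z₂ ^ 2) * (1 - (b : ℂ) * z₂ ^ 2)) =
      z₂ * (z₂ ^ 2 - (a : ℂ)) * (z₂ ^ 2 - (b : ℂ)) *
      ((1 - (a : ℂ) * z₁ ^ 2) * (1 - (b : ℂ) * z₁ ^ 2)) := by
    have h := heq
    rw [hB z₁, hB z₂] at h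
    rw [mul_assoc z₁, div_mul_div_comm, mul_assoc z₂, div_mul_div_comm, ← mul_div_assoc, ← mul_div_assoc,
      div_eq_div_iff (mul_ne_zero hda1 hdb1) (mul_ne_zero hda2 hdb2)] at h
    linear_combination h
  -- the symmetric factor G (in s = z₁+z₂, p = z₁z₂) vanishes
  have hG : (z₁*z₂)^2 - 3*(z₁+z₂)^2*(z₁*z₂) + (z₁+z₂)^4 + (b:ℂ)*(z₁*z₂) + (b:ℂ)*(z₁*z₂)^3
      - (b:ℂ)*(z₁+z₂)^2 - (b:ℂ)*(z₁+z₂)^2*(z₁*z₂)^2 + (b:ℂ)^2*(z₁*z₂)^2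
      + (a:ℂ)*(z₁*z₂) + (a:ℂ)*(z₁*z₂)^3 - (a:ℂ)*(z₁+z₂)^2 - (a:ℂ)*(z₁+z₂)^2*(z₁*z₂)^2
      + (a:ℂ)*(b:ℂ) + 2*(a:ℂ)*(b:ℂ)*(z₁*z₂)^2 + (a:ℂ)*(b:ℂ)*(z₁*z₂)^4
      + (a:ℂ)*(b:ℂ)^2*(z₁*z₂) + (a:ℂ)*(b:ℂ)^2*(z₁*z₂)^3 + (a:ℂ)^2*(z₁*z₂)^2
      + (a:ℂ)^2*(b:ℂ)*(z₁*z₂) + (a:ℂ)^2*(b:ℂ)*(z₁*z₂)^3 + (a:ℂ)^2*(b:ℂ)^2*(z₁*z₂)^2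
      - (a:ℂ)^2*(b:ℂ)^2*(z₁+z₂)^2*(z₁*z₂) = 0 := by
    have h12 : z₁ - z₂ ≠ 0 := sub_ne_zero.mpr hne
    apply mul_left_cancel₀ h12
    rw [mul_zero]
    linear_combination hP
  have habC : (a:ℂ) ^ 3 * (b:ℂ) ^ 3 - 2 * (a:ℂ) ^ 2 * (b:ℂ) ^ 2 - ((a:ℂ) ^ 2 + (b:ℂ) ^ 2)
      + 3 * (a:ℂ) * (b:ℂ) = 0 := by exact_mod_cast congrArg (Complex.ofReal) hab
  -- tangent intersection coordinates
  subst hx hy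
  have hzs : z * (z₁ + z₂) = 2 * (z₁ * z₂) := by
    rw [hz]; field_simp
  have hconj : (starRingEnd ℂ) z * (z₁ + z₂) = 2 := by
    have hc1 : (starRingEnd ℂ) z₁ = z₁⁻¹ := (Complex.inv_eq_conj hz₁).symm
    have hc2 : (starRingEnd ℂ) z₂ = z₂⁻¹ := (Complex.inv_eq_conj hz₂).symm
    rw [hz]
    simp only [map_div₀, map_mul, map_add, map_ofNat, hc1, hc2]
    have hinv : z₁⁻¹ + z₂⁻¹ ≠ 0 := by
      intro h
      apply hsum
      field_simp at h
      linear_combination h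
    field_simp
    linear_combination mul_inv_cancel₀ hsum
  have hadd := Complex.add_conj z
  have hsub := Complex.sub_conj z
  push_cast at hadd hsub
  have hxc : 2*(z.re:ℂ)*(z₁+z₂) = 2*(z₁*z₂) + 2 := by
    linear_combination (z₁+z₂)*hadd.symm + hzs + hconj
  have hyc : 2*(z.im:ℂ)*I*(z₁+z₂) = 2*(z₁*z₂) - 2 := by
    linear_combination (z₁+z₂)*hsub.symm + hzs - hconj
  have hX2 : (z.re:ℂ)^2*(z₁+z₂)^2 = (1+z₁*z₂)^2 := by
    linear_combination (((z.re:ℂ)*(z₁+z₂) + z₁*z₂ + 1)/2) * hxc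
  have hY2 : (z.im:ℂ)^2*(z₁+z₂)^2 = -(z₁*z₂-1)^2 := by
    linear_combination (-(((z.im:ℂ)*I*(z₁+z₂) + z₁*z₂ - 1))/2) * hyc
      + (z.im:ℂ)^2*(z₁+z₂)^2 * Complex.I_sq
  have h1 : ((a:ℂ)*((b:ℂ)+1)^2*(z.re:ℂ)^2 + (a:ℂ)*((b:ℂ)-1)^2*(z.im:ℂ)^2 - 4*(b:ℂ)) * (z₁+z₂)^2
      = (a:ℂ)*((b:ℂ)+1)^2*(1+z₁*z₂)^2 - (a:ℂ)*((b:ℂ)-1)^2*(z₁*z₂-1)^2 - 4*(b:ℂ)*(z₁+z₂)^2 := by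
    linear_combination (a:ℂ)*((b:ℂ)+1)^2*hX2 + (a:ℂ)*((b:ℂ)-1)^2*hY2
  have h2 : (((a:ℂ)^2*(b:ℂ)^3 - (a:ℂ)*(b:ℂ)^2 + 2*(b:ℂ)^2 + 3*(b:ℂ) - (a:ℂ))*(z.re:ℂ)^2
      + ((a:ℂ)^2*(b:ℂ)^3 - (a:ℂ)*(b:ℂ)^2 - 2*(b:ℂ)^2 + 3*(b:ℂ) - (a:ℂ))*(z.im:ℂ)^2
      - 4*(b:ℂ)) * (z₁+z₂)^2
      = ((a:ℂ)^2*(b:ℂ)^3 - (a:ℂ)*(b:ℂ)^2 + 2*(b:ℂ)^2 + 3*(b:ℂ) - (a:ℂ))*(1+z₁*z₂)^2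
      - ((a:ℂ)^2*(b:ℂ)^3 - (a:ℂ)*(b:ℂ)^2 - 2*(b:ℂ)^2 + 3*(b:ℂ) - (a:ℂ))*(z₁*z₂-1)^2
      - 4*(b:ℂ)*(z₁+z₂)^2 := by
    linear_combination ((a:ℂ)^2*(b:ℂ)^3 - (a:ℂ)*(b:ℂ)^2 + 2*(b:ℂ)^2 + 3*(b:ℂ) - (a:ℂ))*hX2
      + ((a:ℂ)^2*(b:ℂ)^3 - (a:ℂ)*(b:ℂ)^2 - 2*(b:ℂ)^2 + 3*(b:ℂ) - (a:ℂ))*hY2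
  have key4 : (((a:ℂ)*((b:ℂ)+1)^2*(z.re:ℂ)^2 + (a:ℂ)*((b:ℂ)-1)^2*(z.im:ℂ)^2 - 4*(b:ℂ)) *
      (((a:ℂ)^2*(b:ℂ)^3 - (a:ℂ)*(b:ℂ)^2 + 2*(b:ℂ)^2 + 3*(b:ℂ) - (a:ℂ))*(z.re:ℂ)^2
      + ((a:ℂ)^2*(b:ℂ)^3 - (a:ℂ)*(b:ℂ)^2 - 2*(b:ℂ)^2 + 3*(b:ℂ) - (a:ℂ))*(z.im:ℂ)^2
      - 4*(b:ℂ))) * (z₁+z₂)^4 = 0 := by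
    linear_combination
      (((a:ℂ)^2*(b:ℂ)^3 - (a:ℂ)*(b:ℂ)^2 + 2*(b:ℂ)^2 + 3*(b:ℂ) - (a:ℂ))*(z.re:ℂ)^2
        + ((a:ℂ)^2*(b:ℂ)^3 - (a:ℂ)*(b:ℂ)^2 - 2*(b:ℂ)^2 + 3*(b:ℂ) - (a:ℂ))*(z.im:ℂ)^2
        - 4*(b:ℂ)) * (z₁+z₂)^2 * h1
      + ((a:ℂ)*((b:ℂ)+1)^2*(1+z₁*z₂)^2 - (a:ℂ)*((b:ℂ)-1)^2*(z₁*z₂-1)^2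
        - 4*(b:ℂ)*(z₁+z₂)^2) * h2
      + 16*(b:ℂ)^2 * hG
      + (16*((z₁*z₂)^2 + (b:ℂ)*(z₁*z₂) + (b:ℂ)*(z₁*z₂)^3 + (b:ℂ)^2*(z₁*z₂)^2)) * habC
  have key : ((a:ℂ)*((b:ℂ)+1)^2*(z.re:ℂ)^2 + (a:ℂ)*((b:ℂ)-1)^2*(z.im:ℂ)^2 - 4*(b:ℂ)) *
      (((a:ℂ)^2*(b:ℂ)^3 - (a:ℂ)*(b:ℂ)^2 + 2*(b:ℂ)^2 + 3*(b:ℂ) - (a:ℂ))*(z.re:ℂ)^2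
      + ((a:ℂ)^2*(b:ℂ)^3 - (a:ℂ)*(b:ℂ)^2 - 2*(b:ℂ)^2 + 3*(b:ℂ) - (a:ℂ))*(z.im:ℂ)^2
      - 4*(b:ℂ)) = 0 := by
    rcases mul_eq_zero.mp key4 with h | h
    · exact h
    · exact absurd h (pow_ne_zero 4 hsum)
  exact_mod_cast key
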